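/- Let n ≥ 1, let e : ℝ → ℝⁿ be continuous, and let t, h ∈ ℝ with h ≥ 0. Define I₁ = ∫₀^h ζ ⟨ e(t+ζ), ∫₀^ζ e(t+ξ) dξ ⟩ dζ. Then ∫₀^h ( ∫₀^ζ ⟨ e(t+ζ) − e(t+ξ), ∫₀^ζ e(t+χ) dχ ⟩ dξ ) dζ = 3 I₁ − h ‖ ∫₀^h e(t+ζ) dζ ‖². -/

import Mathlib

open scoped RealInnerProductSpace
open intervalIntegral

theorem c31_integral_reduction (n : ℕ) (hn : 1 ≤ n) (e : ℝ → EuclideanSpace ℝ (Fin n))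
    (he : Continuous e) (t h : ℝ) (hh : 0 ≤ h) :
    (∫ ζ in (0:ℝ)..h, ∫ ξ in (0:ℝ)..ζ,
        ⟪e (t + ζ) - e (t + ξ), ∫ χ in (0:ℝ)..ζ, e (t + χ)⟫)
      = 3 * (∫ ζ in (0:ℝ)..h, ζ * ⟪e (t + ζ), ∫ ξ in (0:ℝ)..ζ, e (t + ξ)⟫)
        - h * ‖∫ ζ in (0:ℝ)..h, e (t + ζ)‖ ^ 2 := by
  have hcC : Continuous (fun ζ : ℝ => e (t + ζ)) := he.comp (continuous_const.add continuous_id)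
  set c : ℝ → EuclideanSpace ℝ (Fin n) := fun ζ => e (t + ζ) with hc
  set E : ℝ → EuclideanSpace ℝ (Fin n) := fun ζ => ∫ ξ in (0:ℝ)..ζ, c ξ with hEdef
  have hEd : ∀ ζ : ℝ, HasDerivAt E (c ζ) ζ := fun ζ =>
    integral_hasDerivAt_right (hcC.intervalIntegrable 0 ζ)
      hcC.aestronglyMeasurable.stronglyMeasurableAtFilter hcC.continuousAt
  have hEc : Continuous E := continuous_iff_continuousAt.2 fun ζ => (hEd ζ).continuousAt
  have key : ∀ ζ : ℝ, (∫ ξ in (0:ℝ)..ζ, ⟪c ζ - c ξ, E ζ⟫)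
      = ζ * ⟪c ζ, E ζ⟫ - ‖E ζ‖ ^ 2 := by
    intro ζ
    have h1 : (∫ ξ in (0:ℝ)..ζ, ⟪c ξ, E ζ⟫) = ‖E ζ‖ ^ 2 := by
      have := ((innerSL ℝ (E := EuclideanSpace ℝ (Fin n))).flip (E ζ)).intervalIntegral_comp_comm
        (μ := MeasureTheory.volume) (hcC.intervalIntegrable 0 ζ)
      simp only [ContinuousLinearMap.flip_apply, innerSL_apply_apply] at this
      rw [this]
      exact real_inner_self_eq_norm_sq _
    simp only [inner_sub_left]
    rw [intervalIntegral.integral_sub (continuous_const.intervalIntegrable 0 ζ)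
      ((hcC.inner continuous_const).intervalIntegrable 0 ζ), h1,
      intervalIntegral.integral_const]
    simp [smul_eq_mul]
  have hFd : ∀ ζ : ℝ, HasDerivAt (fun ζ => ζ * ⟪E ζ, E ζ⟫)
      (⟪E ζ, E ζ⟫ + ζ * (2 * ⟪c ζ, E ζ⟫)) ζ := by
    intro ζ
    have hi := HasDerivAt.inner ℝ (hEd ζ) (hEd ζ)
    have h2 := (hasDerivAt_id ζ).mul hi
    refine h2.congr_deriv ?_
    simp only [id_eq]
    rw [real_inner_comm (E ζ) (c ζ)]
    ring
  have hintc1 : Continuous fun ζ : ℝ => ⟪E ζ, E ζ⟫ := hEc.inner hEc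
  have hintc2 : Continuous fun ζ : ℝ => ζ * (2 * ⟪c ζ, E ζ⟫) :=
    continuous_id.mul (continuous_const.mul (hcC.inner hEc))
  have hB : (∫ ζ in (0:ℝ)..h, ‖E ζ‖ ^ 2)
      = h * ‖E h‖ ^ 2 - 2 * ∫ ζ in (0:ℝ)..h, ζ * ⟪c ζ, E ζ⟫ := by
    have heq := intervalIntegral.integral_eq_sub_of_hasDerivAt
      (f := fun ζ => ζ * ⟪E ζ, E ζ⟫) (fun ζ _ => hFd ζ)
      ((hintc1.add hintc2).intervalIntegrable 0 h)
    rw [intervalIntegral.integral_add (hintc1.intervalIntegrable 0 h)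
      (hintc2.intervalIntegrable 0 h)] at heq
    have h3 : (∫ ζ in (0:ℝ)..h, ζ * (2 * ⟪c ζ, E ζ⟫))
        = 2 * ∫ ζ in (0:ℝ)..h, ζ * ⟪c ζ, E ζ⟫ := by
      rw [← intervalIntegral.integral_const_mul]
      congr 1; ext ζ; ring
    simp only [real_inner_self_eq_norm_sq] at heq ⊢
    rw [h3] at heq
    linarith [heq]
  calc (∫ ζ in (0:ℝ)..h, ∫ ξ in (0:ℝ)..ζ, ⟪c ζ - c ξ, E ζ⟫)
      = ∫ ζ in (0:ℝ)..h, (ζ * ⟪c ζ, E ζ⟫ - ‖E ζ‖ ^ 2) := by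
        exact intervalIntegral.integral_congr fun ζ _ => key ζ
    _ = (∫ ζ in (0:ℝ)..h, ζ * ⟪c ζ, E ζ⟫) - ∫ ζ in (0:ℝ)..h, ‖E ζ‖ ^ 2 := by
        exact intervalIntegral.integral_sub
          ((continuous_id.mul (hcC.inner hEc)).intervalIntegrable 0 h)
          ((hEc.norm.pow 2).intervalIntegrable 0 h)
    _ = 3 * (∫ ζ in (0:ℝ)..h, ζ * ⟪c ζ, E ζ⟫) - h * ‖E h‖ ^ 2 := by
        rw [hB]; ring
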